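/- Let n, m be positive integers, let f : ℝⁿ → ℝⁿ, g : ℝⁿ → (ℝᵐ →L[ℝ] ℝⁿ), and u : ℝⁿ → ℝᵐ be arbitrary maps, and let V : ℝⁿ → ℝ be a differentiable positive definite function (V(0) = 0 and V(z) > 0 for all z ≠ 0). Let c > 0 and γ ∈ (0,1), and suppose that for every z ∈ ℝⁿ, ⟪∇V(z), f(z) + g(z)(u(z))⟫ + c·(V(z))^γ ≤ 0. Then every differentiable curve x : ℝ → ℝⁿ satisfying x'(t) = f(x(t)) + g(x(t))(u(x(t))) for all t ≥ 0 satisfies x(t) = 0 for all t ≥ (V(x(0)))^{1-γ} / (c(1-γ)). -/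

import Mathlib

open Real Set

/-- Finite-time stability (Theorem 1): if a differentiable positive definite
function `V` satisfies `⟪∇V(z), f(z) + g(z)(u(z))⟫ + c (V z)^γ ≤ 0` everywhere,
then every solution of `ẋ = f(x) + g(x) u(x)` reaches the origin within the
settling time `(V (x 0))^(1-γ) / (c (1-γ))` and stays there. -/
theorem finite_time_stability
    (n m : ℕ) (hn : 0 < n) (hm : 0 < m)
    (f : EuclideanSpace ℝ (Fin n) → EuclideanSpace ℝ (Fin n))
    (g : EuclideanSpace ℝ (Fin n) → (EuclideanSpace ℝ (Fin m) →L[ℝ] EuclideanSpace ℝ (Fin n)))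
    (u : EuclideanSpace ℝ (Fin n) → EuclideanSpace ℝ (Fin m))
    (V : EuclideanSpace ℝ (Fin n) → ℝ)
    (hVdiff : Differentiable ℝ V)
    (hV0 : V 0 = 0)
    (hVpos : ∀ z : EuclideanSpace ℝ (Fin n), z ≠ 0 → 0 < V z)
    (c γ : ℝ) (hc : 0 < c) (hγ : γ ∈ Set.Ioo (0 : ℝ) 1)
    (hdecr : ∀ z : EuclideanSpace ℝ (Fin n),
      (inner ℝ (gradient V z) (f z + g z (u z)) : ℝ) + c * (V z) ^ γ ≤ 0)
    (x : ℝ → EuclideanSpace ℝ (Fin n)) (hx : Differentiable ℝ x)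
    (hode : ∀ t : ℝ, 0 ≤ t → deriv x t = f (x t) + g (x t) (u (x t))) :
    ∀ t : ℝ, (V (x 0)) ^ (1 - γ) / (c * (1 - γ)) ≤ t → x t = 0 := by
  obtain ⟨hγ0, hγ1⟩ := hγ
  have h1γ : 0 < 1 - γ := by linarith
  set W : ℝ → ℝ := fun t => V (x t) with hWdef
  -- W ≥ 0
  have hW0 : ∀ t, 0 ≤ W t := by
    intro t
    by_cases h : x t = 0
    · simp [hWdef, h, hV0]
    · exact le_of_lt (hVpos _ h)
  -- derivative of W
  have hWderiv : ∀ t : ℝ, 0 ≤ t →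
      HasDerivAt W ((inner ℝ (gradient V (x t)) (f (x t) + g (x t) (u (x t))) : ℝ)) t := by
    intro t ht
    have hxd : HasDerivAt x (deriv x t) t := (hx t).hasDerivAt
    have hVd : HasFDerivAt V (InnerProductSpace.toDual ℝ _ (gradient V (x t))) (x t) :=
      (hVdiff (x t)).hasGradientAt.hasFDerivAt
    have := hVd.comp_hasDerivAt t hxd
    rw [hode t ht] at this
    simp only [InnerProductSpace.toDual_apply_apply] at this
    exact this
  have hWdb : ∀ t : ℝ, 0 ≤ t →
      ∃ d : ℝ, HasDerivAt W d t ∧ d ≤ -c * (W t) ^ γ := by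
    intro t ht
    refine ⟨_, hWderiv t ht, ?_⟩
    have := hdecr (x t)
    simp only [hWdef]
    linarith
  have hWcont : Continuous W := hVdiff.continuous.comp hx.continuous
  -- W antitone on Ici 0
  have hanti : AntitoneOn W (Ici (0 : ℝ)) := by
    apply antitoneOn_of_deriv_nonpos (convex_Ici 0) hWcont.continuousOn
    · intro s hs
      rw [interior_Ici] at hs
      exact ((hWderiv s hs.le).differentiableAt).differentiableWithinAt
    · intro s hs
      rw [interior_Ici] at hs
      obtain ⟨d, hd, hdle⟩ := hWdb s hs.le
      rw [hd.deriv]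
      have : 0 ≤ (W s) ^ γ := Real.rpow_nonneg (hW0 s) γ
      nlinarith
  set T : ℝ := (W 0) ^ (1 - γ) / (c * (1 - γ)) with hTdef
  have hcγ : 0 < c * (1 - γ) := mul_pos hc h1γ
  have hT0 : 0 ≤ T := div_nonneg (Real.rpow_nonneg (hW0 0) _) hcγ.le
  -- key claim : W T = 0
  have hWT : W T = 0 := by
    by_contra h
    have hWTpos : 0 < W T := lt_of_le_of_ne (hW0 T) (Ne.symm h)
    have hpos : ∀ s ∈ Icc (0 : ℝ) T, 0 < W s := fun s hs =>
      lt_of_lt_of_le hWTpos (hanti hs.1 (hs.1.trans hs.2) hs.2)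
    set Φ : ℝ → ℝ := fun s => W s ^ (1 - γ) + c * (1 - γ) * s with hΦdef
    have hΦderiv : ∀ s ∈ Icc (0 : ℝ) T,
        HasDerivAt Φ ((1 - γ) * W s ^ (1 - γ - 1) *
          (inner ℝ (gradient V (x s)) (f (x s) + g (x s) (u (x s))) : ℝ) + c * (1 - γ)) s := by
      intro s hs
      have h1 : HasDerivAt (fun y : ℝ => y ^ (1 - γ)) ((1 - γ) * W s ^ (1 - γ - 1)) (W s) :=
        Real.hasDerivAt_rpow_const (Or.inl (hpos s hs).ne')
      have h2 := h1.comp s (hWderiv s hs.1)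
      have h3 := h2.add (((hasDerivAt_id s).const_mul (c * (1 - γ))))
      simp only [mul_one] at h3
      exact h3
    have hΦanti : AntitoneOn Φ (Icc 0 T) := by
      apply antitoneOn_of_deriv_nonpos (convex_Icc 0 T)
      · exact fun s hs => (hΦderiv s hs).differentiableAt.continuousAt.continuousWithinAt
      · intro s hs
        rw [interior_Icc] at hs
        exact (hΦderiv s ⟨hs.1.le, hs.2.le⟩).differentiableAt.differentiableWithinAt
      · intro s hs
        rw [interior_Icc] at hs
        have hs' : s ∈ Icc (0:ℝ) T := ⟨hs.1.le, hs.2.le⟩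
        rw [(hΦderiv s hs').deriv]
        have hWs : 0 < W s := hpos s hs'
        have hdle : (inner ℝ (gradient V (x s)) (f (x s) + g (x s) (u (x s))) : ℝ)
            ≤ -c * (W s) ^ γ := by
          have := hdecr (x s); simp only [hWdef]; linarith
        have hkey : (1 - γ) * W s ^ (1 - γ - 1) *
            (inner ℝ (gradient V (x s)) (f (x s) + g (x s) (u (x s))) : ℝ) ≤ -(c * (1 - γ)) := by
          have hpow : 0 < W s ^ (1 - γ - 1) := Real.rpow_pos_of_pos hWs _
          have h3 : (1 - γ) * W s ^ (1 - γ - 1) *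
              (inner ℝ (gradient V (x s)) (f (x s) + g (x s) (u (x s))) : ℝ)
              ≤ (1 - γ) * W s ^ (1 - γ - 1) * (-c * (W s) ^ γ) := by
            apply mul_le_mul_of_nonneg_left hdle
            positivity
          have h4 : W s ^ (1 - γ - 1) * W s ^ γ = 1 := by
            rw [← Real.rpow_add hWs]
            norm_num
          calc (1 - γ) * W s ^ (1 - γ - 1) *
              (inner ℝ (gradient V (x s)) (f (x s) + g (x s) (u (x s))) : ℝ)
              ≤ (1 - γ) * W s ^ (1 - γ - 1) * (-c * (W s) ^ γ) := h3
            _ = -(c * (1 - γ)) * (W s ^ (1 - γ - 1) * W s ^ γ) := by ring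
            _ = -(c * (1 - γ)) := by rw [h4, mul_one]
        linarith
    have hΦle := hΦanti (left_mem_Icc.mpr hT0) (right_mem_Icc.mpr hT0) hT0
    have hcT : c * (1 - γ) * T = W 0 ^ (1 - γ) := by
      rw [hTdef]; field_simp
    have hΦ0 : Φ 0 = W 0 ^ (1 - γ) := by simp [hΦdef]
    have hΦT : Φ T = W T ^ (1 - γ) + W 0 ^ (1 - γ) := by rw [hΦdef]; simp [hcT]
    have : W T ^ (1 - γ) ≤ 0 := by rw [hΦ0, hΦT] at hΦle; linarith
    have : 0 < W T ^ (1 - γ) := Real.rpow_pos_of_pos hWTpos _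
    linarith
  -- conclude
  intro t ht
  have ht0 : (0 : ℝ) ≤ t := hT0.trans ht
  have hle : W t ≤ W T := hanti hT0 ht0 ht
  have hWt : W t = 0 := le_antisymm (hWT ▸ hle) (hW0 t)
  by_contra hxt
  exact absurd hWt (ne_of_gt (hVpos _ hxt))
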